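/- Let c₁, c₂ be nonzero complex numbers and let a₁, a₂ ∈ ℂ with |a₁| = |a₂| = 1 and a₁ ≠ a₂. Then the sequence (c₁ a₁ⁿ + c₂ a₂ⁿ)_{n∈ℕ} does not converge to 0 as n → ∞. -/

import Mathlib

open MeasureTheory Filter Bornology
open scoped ENNReal

/-- The (quasi-)norm of the Fock space `F^p`, valued in `ℝ≥0∞`. -/
noncomputable def fockNorm (p : ℝ) (f : ℂ → ℂ) : ℝ≥0∞ :=
  (ENNReal.ofReal (p / (2 * Real.pi)) *
    ∫⁻ z : ℂ, ENNReal.ofReal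
      (‖f z‖ ^ p * Real.exp (-(p * ‖z‖ ^ 2) / 2))) ^ (1 / p)

/-- Membership in the Fock space `F^p`: entire with finite Fock norm. -/
def MemFock (p : ℝ) (f : ℂ → ℂ) : Prop :=
  Differentiable ℂ f ∧ fockNorm p f < ⊤

/-- `T` is bounded from `F^p` to `F^q`. -/
def FockBounded (p q : ℝ) (T : (ℂ → ℂ) → ℂ → ℂ) : Prop :=
  ∃ C : ℝ, 0 ≤ C ∧ ∀ f : ℂ → ℂ, MemFock p f →
    MemFock q (T f) ∧ fockNorm q (T f) ≤ ENNReal.ofReal C * fockNorm p f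

/-- `T` is compact from `F^p` to `F^q`. -/
def FockCompact (p q : ℝ) (T : (ℂ → ℂ) → ℂ → ℂ) : Prop :=
  FockBounded p q T ∧
    ∀ f : ℕ → ℂ → ℂ, (∀ n, MemFock p (f n) ∧ fockNorm p (f n) ≤ 1) →
      ∃ φ : ℕ → ℕ, StrictMono φ ∧ ∃ g : ℂ → ℂ, MemFock q g ∧
        Tendsto (fun k => fockNorm q (fun z => T (f (φ k)) z - g z)) atTop (nhds 0)

/-- The quantity `m_z(ψ, φ) = |ψ(z)| e^{(|φ(z)|² - |z|²)/2}`. -/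
noncomputable def mz (ψ φ : ℂ → ℂ) (z : ℂ) : ℝ :=
  ‖ψ z‖ * Real.exp ((‖φ z‖ ^ 2 - ‖z‖ ^ 2) / 2)

/-- `ρ(w₁, w₂) = |w₁ - w₂|² / (2(2 + |w₁ - w₂|²))`. -/
noncomputable def rho (w₁ w₂ : ℂ) : ℝ :=
  ‖w₁ - w₂‖ ^ 2 / (2 * (2 + ‖w₁ - w₂‖ ^ 2))

/-- The kernel `K_w(z) = e^{\overline{w} z}`. -/
noncomputable def Kfun (w : ℂ) : ℂ → ℂ :=
  fun z => Complex.exp (starRingEnd ℂ w * z)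

/-- The normalized kernel `k_w(z) = e^{\overline{w} z - |w|²/2}`. -/
noncomputable def kfun (w : ℂ) : ℂ → ℂ :=
  fun z => Complex.exp (starRingEnd ℂ w * z - ((‖w‖ : ℝ) : ℂ) ^ 2 / 2)

/-- The essential norm of `L : F^p → F^q`. -/
noncomputable def essNorm (p q : ℝ) (L : (ℂ → ℂ) → ℂ → ℂ) : ℝ≥0∞ :=
  sInf { s : ℝ≥0∞ | ∃ K : (ℂ → ℂ) → ℂ → ℂ, IsLinearMap ℂ K ∧ FockCompact p q K ∧
    s = ⨆ f : {f : ℂ → ℂ // MemFock p f ∧ fockNorm p f ≤ 1},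
          fockNorm q (fun z => L f.1 z - K f.1 z) }

/-- If `c₁, c₂ ≠ 0`, `|a₁| = |a₂| = 1` and `a₁ ≠ a₂`, then
`c₁ a₁ⁿ + c₂ a₂ⁿ` does not converge to `0`. -/
theorem not_tendsto_zero (c₁ c₂ a₁ a₂ : ℂ) (hc₁ : c₁ ≠ 0) (hc₂ : c₂ ≠ 0)
    (ha₁ : ‖a₁‖ = 1) (ha₂ : ‖a₂‖ = 1) (hne : a₁ ≠ a₂) :
    ¬ Filter.Tendsto (fun n : ℕ => c₁ * a₁ ^ n + c₂ * a₂ ^ n) Filter.atTop (nhds 0) := by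
  intro h
  set s : ℕ → ℂ := fun n => c₁ * a₁ ^ n + c₂ * a₂ ^ n with hs
  have h2 : Filter.Tendsto (fun n => s (n + 1)) Filter.atTop (nhds 0) :=
    h.comp (Filter.tendsto_add_atTop_nat 1)
  have h3 : Filter.Tendsto (fun n => a₂ * s n - s (n + 1)) Filter.atTop (nhds 0) := by
    have := (h.const_mul a₂).sub h2
    simpa using this
  have heq : (fun n => a₂ * s n - s (n + 1)) = fun n => c₁ * (a₂ - a₁) * a₁ ^ n := by
    funext n
    simp only [hs]
    ring
  rw [heq] at h3
  have h4 : Filter.Tendsto (fun n => ‖c₁ * (a₂ - a₁) * a₁ ^ n‖)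
      Filter.atTop (nhds 0) := by
    have := (continuous_norm.tendsto 0).comp h3
    simp only [Function.comp_def, norm_zero] at this
    exact this
  have h5 : (fun n : ℕ => ‖c₁ * (a₂ - a₁) * a₁ ^ n‖)
      = fun _ : ℕ => ‖c₁‖ * ‖a₂ - a₁‖ := by
    funext n
    rw [norm_mul, norm_mul, norm_pow, ha₁, one_pow, mul_one]
  rw [h5] at h4
  have := tendsto_nhds_unique h4 tendsto_const_nhds
  have hpos : ‖c₁‖ * ‖a₂ - a₁‖ ≠ 0 := by
    apply mul_ne_zero
    · simpa using hc₁
    · simpa [sub_eq_zero] using (Ne.symm hne)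
  exact hpos this.symm
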